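/- For 1 ≤ d ≤ n−1 with 2d ≥ n, the variance of the number of d-inversions of a uniformly random permutation in S_n equals −d³/6 + (n/3 − 7/24)d² + (−n²/6 + 5n/12 − 1/8)d + (n³/36 − n²/12 + n/18). -/

import Mathlib

open Finset Equiv

variable {n : ℕ}

lemma card_comp (π : Equiv.Perm (Fin n)) (Q : Equiv.Perm (Fin n) → Prop) [DecidablePred Q] :
    (univ.filter fun σ => Q (σ * π)).card = (univ.filter Q).card := by
  apply Finset.card_bij' (fun σ _ => σ * π) (fun σ _ => σ * π⁻¹)
  · intro σ hσ; simp only [mem_filter, mem_univ, true_and] at hσ ⊢; exact hσ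
  · intro σ hσ; simp only [mem_filter, mem_univ, true_and, mul_assoc,
      mul_inv_cancel, mul_one, inv_mul_cancel] at hσ ⊢; simpa [mul_assoc] using hσ
  · intro σ _; simp [mul_assoc]
  · intro σ _; simp [mul_assoc]

lemma vne (σ : Equiv.Perm (Fin n)) {a b : Fin n} (h : a ≠ b) : (σ a : ℕ) ≠ (σ b : ℕ) := by
  simp only [ne_eq, Fin.val_inj]
  exact fun hh => h (σ.injective hh)

/-- count of σ with σ x < σ y < σ z -/
def f (x y z : Fin n) : ℕ :=
  (univ.filter fun σ : Equiv.Perm (Fin n) => σ x < σ y ∧ σ y < σ z).card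

/-- count of σ with σ b < σ a and σ e < σ c -/
def g (a b c e : Fin n) : ℕ :=
  (univ.filter fun σ : Equiv.Perm (Fin n) => σ b < σ a ∧ σ e < σ c).card

lemma f_comp (π : Equiv.Perm (Fin n)) (x y z : Fin n) : f (π x) (π y) (π z) = f x y z := by
  unfold f
  rw [← card_comp π (fun σ => σ x < σ y ∧ σ y < σ z)]
  exact congrArg Finset.card (Finset.filter_congr fun σ _ => by
    simp [Equiv.Perm.mul_apply])

lemma g_comp (π : Equiv.Perm (Fin n)) (a b c e : Fin n) :
    g (π a) (π b) (π c) (π e) = g a b c e := by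
  unfold g
  rw [← card_comp π (fun σ => σ b < σ a ∧ σ e < σ c)]
  exact congrArg Finset.card (Finset.filter_congr fun σ _ => by
    simp [Equiv.Perm.mul_apply])

lemma six (a b c : Fin n) (hab : a ≠ b) (hac : a ≠ c) (hbc : b ≠ c) :
    6 * f a b c = (univ : Finset (Equiv.Perm (Fin n))).card := by
  have hca : Equiv.swap a b c = c := Equiv.swap_apply_of_ne_of_ne hac.symm hbc.symm
  have hba : Equiv.swap b c a = a := Equiv.swap_apply_of_ne_of_ne hab hac
  have hcb : Equiv.swap a c b = b := Equiv.swap_apply_of_ne_of_ne hab.symm hbc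
  have e1 : f b a c = f a b c := by
    have := f_comp (Equiv.swap a b) a b c
    rwa [Equiv.swap_apply_left, Equiv.swap_apply_right, hca] at this
  have e2 : f a c b = f a b c := by
    have := f_comp (Equiv.swap b c) a b c
    rwa [hba, Equiv.swap_apply_left, Equiv.swap_apply_right] at this
  have e3 : f c b a = f a b c := by
    have := f_comp (Equiv.swap a c) a b c
    rwa [Equiv.swap_apply_left, hcb, Equiv.swap_apply_right] at this
  have e4 : f b c a = f a b c := by
    have := f_comp (Equiv.swap a b) a c b
    rwa [Equiv.swap_apply_left, hca, Equiv.swap_apply_right, e2] at this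
  have e5 : f c a b = f a b c := by
    have h := f_comp (Equiv.swap a b) c b a
    rw [hca, Equiv.swap_apply_right, Equiv.swap_apply_left] at h
    rw [h, e3]
  have key : (univ : Finset (Equiv.Perm (Fin n))).card =
      f a b c + f a c b + f b a c + f b c a + f c a b + f c b a := by
    unfold f
    simp only [Finset.card_filter]
    rw [← Finset.sum_add_distrib, ← Finset.sum_add_distrib, ← Finset.sum_add_distrib,
      ← Finset.sum_add_distrib, ← Finset.sum_add_distrib]
    rw [Finset.card_univ, ← Finset.card_univ, Finset.card_eq_sum_ones]
    refine Finset.sum_congr rfl fun σ _ => ?_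
    have h1 := vne σ hab
    have h2 := vne σ hac
    have h3 := vne σ hbc
    simp only [Fin.lt_def]
    split_ifs <;> omega
  omega

lemma two_pt (a b : Fin n) (hab : a ≠ b) :
    2 * g a b a b = (univ : Finset (Equiv.Perm (Fin n))).card := by
  have e1 : (univ.filter fun σ : Equiv.Perm (Fin n) => σ a < σ b).card
      = (univ.filter fun σ : Equiv.Perm (Fin n) => σ b < σ a).card := by
    have := card_comp (Equiv.swap a b) (fun σ => σ b < σ a)
    simpa [Equiv.Perm.mul_apply, Equiv.swap_apply_left, Equiv.swap_apply_right] using this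
  have hg : g a b a b = (univ.filter fun σ : Equiv.Perm (Fin n) => σ b < σ a).card := by
    unfold g
    exact congrArg Finset.card (Finset.filter_congr fun σ _ => by tauto)
  have key : (univ : Finset (Equiv.Perm (Fin n))).card =
      (univ.filter fun σ : Equiv.Perm (Fin n) => σ b < σ a).card +
      (univ.filter fun σ : Equiv.Perm (Fin n) => σ a < σ b).card := by
    rw [Finset.card_filter, Finset.card_filter, ← Finset.sum_add_distrib]
    rw [Finset.card_univ, ← Finset.card_univ, Finset.card_eq_sum_ones]
    refine Finset.sum_congr rfl fun σ _ => ?_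
    have := vne σ hab
    simp only [Fin.lt_def]
    split_ifs <;> omega
  omega

lemma g_max (a b e : Fin n) (hab : a ≠ b) (hae : a ≠ e) (hbe : b ≠ e) :
    3 * g a b a e = (univ : Finset (Equiv.Perm (Fin n))).card := by
  have hsplit : g a b a e = f b e a + f e b a := by
    unfold g f
    simp only [Finset.card_filter]
    rw [← Finset.sum_add_distrib]
    refine Finset.sum_congr rfl fun σ _ => ?_
    have h1 := vne σ hbe
    simp only [Fin.lt_def]
    split_ifs <;> omega
  have s1 := six b e a hbe hab.symm hae.symm
  have s2 := six e b a hbe.symm hae.symm hab.symm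
  omega

lemma g_min (a b k : Fin n) (hab : a ≠ b) (hbk : b ≠ k) (hak : a ≠ k) :
    3 * g a b k b = (univ : Finset (Equiv.Perm (Fin n))).card := by
  have hsplit : g a b k b = f b a k + f b k a := by
    unfold g f
    simp only [Finset.card_filter]
    rw [← Finset.sum_add_distrib]
    refine Finset.sum_congr rfl fun σ _ => ?_
    have h1 := vne σ hak
    simp only [Fin.lt_def]
    split_ifs <;> omega
  have s1 := six b a k hab.symm hbk hak
  have s2 := six b k a hbk hab.symm hak.symm
  omega

lemma g_chain (i j l : Fin n) (hij : i ≠ j) (hjl : j ≠ l) (hil : i ≠ l) :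
    6 * g i j j l = (univ : Finset (Equiv.Perm (Fin n))).card := by
  have hsplit : g i j j l = f l j i := by
    unfold g f
    exact congrArg Finset.card (Finset.filter_congr fun σ _ => by tauto)
  rw [hsplit]
  exact six l j i hjl.symm hil.symm hij.symm

lemma g_chain2 (i j k : Fin n) (hij : i ≠ j) (hik : i ≠ k) (hjk : j ≠ k) :
    6 * g i j k i = (univ : Finset (Equiv.Perm (Fin n))).card := by
  have hsplit : g i j k i = f j i k := rfl
  rw [hsplit]
  exact six j i k hij.symm hjk hik

lemma g_four (a b c e : Fin n) (hab : a ≠ b) (hce : c ≠ e) (hac : a ≠ c) (hae : a ≠ e)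
    (hbc : b ≠ c) (hbe : b ≠ e) :
    4 * g a b c e = (univ : Finset (Equiv.Perm (Fin n))).card := by
  have e1 : g b a c e = g a b c e := by
    have := g_comp (Equiv.swap a b) b a c e
    rw [Equiv.swap_apply_right, Equiv.swap_apply_left,
      Equiv.swap_apply_of_ne_of_ne hac.symm hbc.symm,
      Equiv.swap_apply_of_ne_of_ne hae.symm hbe.symm] at this
    exact this.symm
  have e2 : g a b e c = g a b c e := by
    have := g_comp (Equiv.swap c e) a b e c
    rw [Equiv.swap_apply_right, Equiv.swap_apply_left,
      Equiv.swap_apply_of_ne_of_ne hac hae,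
      Equiv.swap_apply_of_ne_of_ne hbc hbe] at this
    exact this.symm
  have e3 : g b a e c = g a b c e := by
    have := g_comp (Equiv.swap c e) b a e c
    rw [Equiv.swap_apply_right, Equiv.swap_apply_left,
      Equiv.swap_apply_of_ne_of_ne hbc hbe,
      Equiv.swap_apply_of_ne_of_ne hac hae, e1] at this
    exact this.symm
  have key : (univ : Finset (Equiv.Perm (Fin n))).card =
      g a b c e + g b a c e + g a b e c + g b a e c := by
    unfold g
    simp only [Finset.card_filter]
    rw [← Finset.sum_add_distrib, ← Finset.sum_add_distrib, ← Finset.sum_add_distrib]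
    rw [Finset.card_univ, ← Finset.card_univ, Finset.card_eq_sum_ones]
    refine Finset.sum_congr rfl fun σ _ => ?_
    have h1 := vne σ hab
    have h2 := vne σ hce
    simp only [Fin.lt_def]
    split_ifs <;> omega
  omega

def ee (i j : ℕ) : ℚ := if i = j then 1 else 0

def ww (i j k l : ℕ) : ℚ :=
  1/4 + ee i k * ee j l / 4 + ee i k * (1 - ee j l) / 12 + ee j l * (1 - ee i k) / 12
    - ee j k / 12 - ee i l / 12

lemma master {n : ℕ} (i j k l : Fin n) (hij : (i:ℕ) < (j:ℕ)) (hkl : (k:ℕ) < (l:ℕ)) :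
    ((univ.filter fun σ : Equiv.Perm (Fin n) => σ j < σ i ∧ σ l < σ k).card : ℚ)
      = (((univ : Finset (Equiv.Perm (Fin n))).card : ℚ)) * ww i.val j.val k.val l.val := by
  have hij0 : i ≠ j := by simp only [ne_eq, ← Fin.val_inj]; omega
  have hkl0 : k ≠ l := by simp only [ne_eq, ← Fin.val_inj]; omega
  by_cases h1 : (i:ℕ) = (k:ℕ)
  · have hik : i = k := Fin.val_inj.mp h1
    subst hik
    by_cases h2 : (j:ℕ) = (l:ℕ)
    · have hjl : j = l := Fin.val_inj.mp h2
      subst hjl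
      have hw : ww i.val j.val i.val j.val = 1/2 := by
        unfold ww ee
        rw [if_pos rfl, if_pos rfl, if_neg (by omega : ¬ (j:ℕ) = (i:ℕ)),
          if_neg (by omega : ¬ (i:ℕ) = (j:ℕ))]
        norm_num
      rw [hw]
      have hc := two_pt i j hij0
      have hg : (univ.filter fun σ : Equiv.Perm (Fin n) => σ j < σ i ∧ σ j < σ i).card
          = g i j i j := rfl
      rw [hg]
      have := congrArg (fun m : ℕ => (m : ℚ)) hc
      push_cast at this
      linarith
    · -- i = k, j ≠ l
      have hw : ww i.val j.val i.val l.val = 1/3 := by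
        unfold ww ee
        rw [if_pos rfl, if_neg h2, if_neg (by omega : ¬ (j:ℕ) = (i:ℕ)),
          if_neg (by omega : ¬ (i:ℕ) = (l:ℕ))]
        norm_num
      rw [hw]
      have hil : i ≠ l := by simp only [ne_eq, ← Fin.val_inj]; omega
      have hjl : j ≠ l := by simp only [ne_eq, ← Fin.val_inj]; omega
      have hc := g_max i j l hij0 hil hjl
      have hg : (univ.filter fun σ : Equiv.Perm (Fin n) => σ j < σ i ∧ σ l < σ i).card
          = g i j i l := rfl
      rw [hg]
      have := congrArg (fun m : ℕ => (m : ℚ)) hc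
      push_cast at this
      linarith
  · by_cases h2 : (j:ℕ) = (l:ℕ)
    · -- j = l, i ≠ k
      have hjl : j = l := Fin.val_inj.mp h2
      subst hjl
      have hw : ww i.val j.val k.val j.val = 1/3 := by
        unfold ww ee
        rw [if_pos rfl, if_neg h1, if_neg (by omega : ¬ (j:ℕ) = (k:ℕ)),
          if_neg (by omega : ¬ (i:ℕ) = (j:ℕ))]
        norm_num
      rw [hw]
      have hik : i ≠ k := by simp only [ne_eq, ← Fin.val_inj]; omega
      have hjk : j ≠ k := by simp only [ne_eq, ← Fin.val_inj]; omega
      have hc := g_min i j k hij0 hjk hik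
      have hg : (univ.filter fun σ : Equiv.Perm (Fin n) => σ j < σ i ∧ σ j < σ k).card
          = g i j k j := rfl
      rw [hg]
      have := congrArg (fun m : ℕ => (m : ℚ)) hc
      push_cast at this
      linarith
    · by_cases h3 : (j:ℕ) = (k:ℕ)
      · -- chain i < j = k < l
        have hjk : j = k := Fin.val_inj.mp h3
        subst hjk
        have hw : ww i.val j.val j.val l.val = 1/6 := by
          unfold ww ee
          rw [if_neg h1, if_neg h2, if_pos rfl, if_neg (by omega : ¬ (i:ℕ) = (l:ℕ))]
          norm_num
        rw [hw]
        have hjl : j ≠ l := by simp only [ne_eq, ← Fin.val_inj]; omega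
        have hil : i ≠ l := by simp only [ne_eq, ← Fin.val_inj]; omega
        have hc := g_chain i j l hij0 hjl hil
        have hg : (univ.filter fun σ : Equiv.Perm (Fin n) => σ j < σ i ∧ σ l < σ j).card
            = g i j j l := rfl
        rw [hg]
        have := congrArg (fun m : ℕ => (m : ℚ)) hc
        push_cast at this
        linarith
      · by_cases h4 : (i:ℕ) = (l:ℕ)
        · -- chain k < l = i < j
          have hil : i = l := Fin.val_inj.mp h4
          subst hil
          have hw : ww i.val j.val k.val i.val = 1/6 := by
            unfold ww ee
            rw [if_neg h1, if_neg h2, if_neg h3, if_pos rfl]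
            norm_num
          rw [hw]
          have hik : i ≠ k := by simp only [ne_eq, ← Fin.val_inj]; omega
          have hjk : j ≠ k := by simp only [ne_eq, ← Fin.val_inj]; omega
          have hc := g_chain2 i j k hij0 hik hjk
          have hg : (univ.filter fun σ : Equiv.Perm (Fin n) => σ j < σ i ∧ σ i < σ k).card
              = g i j k i := rfl
          rw [hg]
          have := congrArg (fun m : ℕ => (m : ℚ)) hc
          push_cast at this
          linarith
        · -- all distinct
          have hw : ww i.val j.val k.val l.val = 1/4 := by
            unfold ww ee
            rw [if_neg h1, if_neg h2, if_neg h3, if_neg h4]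
            norm_num
          rw [hw]
          have hik : i ≠ k := by simp only [ne_eq, ← Fin.val_inj]; omega
          have hil : i ≠ l := by simp only [ne_eq, ← Fin.val_inj]; omega
          have hjk : j ≠ k := by simp only [ne_eq, ← Fin.val_inj]; omega
          have hjl : j ≠ l := by simp only [ne_eq, ← Fin.val_inj]; omega
          have hc := g_four i j k l hij0 hkl0 hik hil hjk hjl
          have hg : (univ.filter fun σ : Equiv.Perm (Fin n) => σ j < σ i ∧ σ l < σ k).card
              = g i j k l := rfl
          rw [hg]
          have := congrArg (fun m : ℕ => (m : ℚ)) hc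
          push_cast at this
          linarith


def vv (d i j : ℕ) : ℚ := if i < j ∧ j ≤ i + d then 1 else 0

lemma sum_mul_ee {m x : ℕ} (hx : x < m) (F : ℕ → ℚ) :
    ∑ l ∈ range m, F l * ee x l = F x := by
  have h : ∀ l ∈ range m, F l * ee x l = if x = l then F l else 0 := by
    intro l _
    unfold ee
    split_ifs with h
    · subst h; ring
    · ring
  rw [Finset.sum_congr rfl h, Finset.sum_ite_eq]
  simp [hx]

theorem arith_core (n d : ℕ) :
    (∑ i ∈ range n, ∑ j ∈ range n, ∑ k ∈ range n, ∑ l ∈ range n,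
        vv d i j * vv d k l * ww i j k l)
      - ((∑ i ∈ range n, ∑ j ∈ range n, vv d i j) / 2)^2
    = (∑ x ∈ range n, ((∑ j ∈ range n, vv d x j)
        + ((∑ j ∈ range n, vv d x j) - (∑ i ∈ range n, vv d i x))^2)) / 12 := by
  -- abbreviations
  let sQ : ℕ → ℚ := fun x => ∑ j ∈ range n, vv d x j
  let tQ : ℕ → ℚ := fun x => ∑ i ∈ range n, vv d i x
  let M : ℚ := ∑ i ∈ range n, sQ i
  -- step 1 : innermost sum over l
  have step1 : ∀ i ∈ range n, ∀ j ∈ range n, ∀ k ∈ range n,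
      ∑ l ∈ range n, vv d k l * ww i j k l
        = sQ k * (1/4 + ee i k/12 - ee j k/12) + (vv d k j) * (ee i k/12 + 1/12)
          - vv d k i * (1/12) := by
    intro i hi j hj k hk
    rw [mem_range] at hi hj
    have point : ∀ l ∈ range n, vv d k l * ww i j k l =
        vv d k l * (1/4 + ee i k/12 - ee j k/12)
        + (vv d k l * ee j l) * (ee i k/12 + 1/12)
        - (vv d k l * ee i l) * (1/12) := by
      intro l _
      unfold ww ee
      split_ifs <;> ring
    rw [Finset.sum_congr rfl point, Finset.sum_sub_distrib, Finset.sum_add_distrib,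
      ← Finset.sum_mul, ← Finset.sum_mul, ← Finset.sum_mul,
      sum_mul_ee hj (fun l => vv d k l), sum_mul_ee hi (fun l => vv d k l)]
  -- step 2 : sum over k
  have step2 : ∀ i ∈ range n, ∀ j ∈ range n,
      ∑ k ∈ range n, ∑ l ∈ range n, vv d k l * ww i j k l
        = M * (1/4) + sQ i * (1/12) - sQ j * (1/12) + vv d i j * (1/12)
          + tQ j * (1/12) - tQ i * (1/12) := by
    intro i hi j hj
    rw [Finset.sum_congr rfl (step1 i hi j hj)]
    rw [mem_range] at hi hj
    have point2 : ∀ k ∈ range n,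
        sQ k * (1/4 + ee i k/12 - ee j k/12) + (vv d k j) * (ee i k/12 + 1/12)
          - vv d k i * (1/12)
        = sQ k * (1/4) + (sQ k * ee i k) * (1/12) - (sQ k * ee j k) * (1/12)
          + (vv d k j * ee i k) * (1/12) + vv d k j * (1/12) - vv d k i * (1/12) := by
      intro k _
      unfold ee
      split_ifs <;> ring
    rw [Finset.sum_congr rfl point2]
    rw [Finset.sum_sub_distrib, Finset.sum_add_distrib, Finset.sum_add_distrib,
      Finset.sum_sub_distrib, Finset.sum_add_distrib,
      ← Finset.sum_mul, ← Finset.sum_mul, ← Finset.sum_mul, ← Finset.sum_mul,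
      ← Finset.sum_mul, ← Finset.sum_mul,
      sum_mul_ee hi sQ, sum_mul_ee hj sQ, sum_mul_ee hi (fun k => vv d k j)]
  -- step 3 : factor out vv d i j and expand
  have step3 : ∀ i ∈ range n, ∀ j ∈ range n,
      ∑ k ∈ range n, ∑ l ∈ range n, vv d i j * vv d k l * ww i j k l
        = vv d i j * (M * (1/4)) + vv d i j * (sQ i * (1/12))
          - vv d i j * sQ j * (1/12) + vv d i j * (1/12)
          + vv d i j * tQ j * (1/12) - vv d i j * (tQ i * (1/12)) := by
    intro i hi j hj
    have hfac : ∑ k ∈ range n, ∑ l ∈ range n, vv d i j * vv d k l * ww i j k l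
        = vv d i j * ∑ k ∈ range n, ∑ l ∈ range n, vv d k l * ww i j k l := by
      rw [Finset.mul_sum]
      refine Finset.sum_congr rfl fun k _ => ?_
      rw [Finset.mul_sum]
      exact Finset.sum_congr rfl fun l _ => by ring
    rw [hfac, step2 i hi j hj]
    have : vv d i j * vv d i j = vv d i j := by unfold vv; split_ifs <;> ring
    calc vv d i j * (M * (1/4) + sQ i * (1/12) - sQ j * (1/12) + vv d i j * (1/12)
          + tQ j * (1/12) - tQ i * (1/12))
        = vv d i j * (M * (1/4)) + vv d i j * (sQ i * (1/12))
          - vv d i j * sQ j * (1/12) + (vv d i j * vv d i j) * (1/12)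
          + vv d i j * tQ j * (1/12) - vv d i j * (tQ i * (1/12)) := by ring
      _ = _ := by rw [this]
  -- assemble the double sum
  have step4 : ∑ i ∈ range n, ∑ j ∈ range n, ∑ k ∈ range n, ∑ l ∈ range n,
        vv d i j * vv d k l * ww i j k l
      = M * (M * (1/4)) + (∑ i ∈ range n, sQ i * (sQ i * (1/12)))
        - (∑ x ∈ range n, tQ x * sQ x * (1/12)) + M * (1/12)
        + (∑ x ∈ range n, tQ x * tQ x * (1/12))
        - (∑ i ∈ range n, sQ i * (tQ i * (1/12))) := by
    rw [Finset.sum_congr rfl (fun i hi => Finset.sum_congr rfl (fun j hj => step3 i hi j hj))]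
    rw [Finset.sum_congr rfl (fun i _ => Finset.sum_sub_distrib _ _),
        Finset.sum_sub_distrib]
    rw [Finset.sum_congr rfl (fun i _ => Finset.sum_add_distrib),
        Finset.sum_add_distrib]
    rw [Finset.sum_congr rfl (fun i _ => Finset.sum_add_distrib),
        Finset.sum_add_distrib]
    rw [Finset.sum_congr rfl (fun i _ => Finset.sum_sub_distrib _ _),
        Finset.sum_sub_distrib]
    rw [Finset.sum_congr rfl (fun i _ => Finset.sum_add_distrib),
        Finset.sum_add_distrib]
    congr 1
    congr 1
    congr 1
    congr 1
    congr 1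
    · -- A term
      simp only [← Finset.sum_mul]; rfl
    · -- B term
      exact Finset.sum_congr rfl fun i _ => by rw [← Finset.sum_mul]
    · -- C term
      rw [Finset.sum_comm]
      exact Finset.sum_congr rfl fun j _ => by rw [← Finset.sum_mul, ← Finset.sum_mul]
    · -- D term
      simp only [← Finset.sum_mul]; rfl
    · -- E term
      rw [Finset.sum_comm]
      exact Finset.sum_congr rfl fun j _ => by rw [← Finset.sum_mul, ← Finset.sum_mul]
    · -- F term
      exact Finset.sum_congr rfl fun i _ => by rw [← Finset.sum_mul]
  rw [step4]
  have hM : ∑ i ∈ range n, ∑ j ∈ range n, vv d i j = M := rfl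
  rw [hM]
  conv_rhs => rw [Finset.sum_div]
  have hsum : ∀ x ∈ range n,
      ((∑ j ∈ range n, vv d x j) + ((∑ j ∈ range n, vv d x j) - ∑ i ∈ range n, vv d i x)^2) / 12
      = sQ x * (sQ x * (1/12)) - tQ x * sQ x * (1/12) + tQ x * tQ x * (1/12)
        - sQ x * (tQ x * (1/12)) + sQ x * (1/12) := by
    intro x _
    show (sQ x + (sQ x - tQ x)^2)/12 = _
    ring
  rw [Finset.sum_congr rfl hsum]
  simp only [Finset.sum_add_distrib, Finset.sum_sub_distrib]
  have hM12 : (∑ x ∈ range n, sQ x * (1/12)) = M * (1/12) := by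
    rw [← Finset.sum_mul]
  rw [hM12]
  have hMsq : M * (M * (1/4)) = (M/2)^2 := by ring
  rw [hMsq]
  ring

lemma sQ_eval {n d i : ℕ} (hi : i < n) :
    ∑ j ∈ range n, vv d i j = ((min d (n-1-i) : ℕ) : ℚ) := by
  unfold vv
  rw [Finset.sum_boole]
  congr 1
  have : (range n).filter (fun j => i < j ∧ j ≤ i + d) = Finset.Ioc i (min (i+d) (n-1)) := by
    ext x
    simp only [mem_filter, mem_range, Finset.mem_Ioc, lt_min_iff, le_min_iff]
    omega
  rw [this, Nat.card_Ioc]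
  omega

lemma tQ_eval {n d j : ℕ} (hj : j < n) :
    ∑ i ∈ range n, vv d i j = ((min j d : ℕ) : ℚ) := by
  unfold vv
  rw [Finset.sum_boole]
  congr 1
  have : (range n).filter (fun i => i < j ∧ j ≤ i + d) = Finset.Ico (j - d) j := by
    ext x
    simp only [mem_filter, mem_range, Finset.mem_Ico]
    omega
  rw [this, Nat.card_Ico]
  omega

lemma sum_shift_poly (L a : ℕ) (u v w1 w2 : ℚ) :
    ∑ k ∈ range L, ((u + v*((a:ℚ)+(k:ℚ))) + (w1 + w2*((a:ℚ)+(k:ℚ)))^2)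
      = L*(u + v*a + (w1+w2*a)^2) + (v + 2*(w1+w2*a)*w2)*(L*(L-1)/2)
        + w2^2*(L*(L-1)*(2*L-1)/6) := by
  induction L with
  | zero => simp
  | succ L ih =>
    rw [Finset.sum_range_succ, ih]
    push_cast
    ring

theorem arith_eval (n d : ℕ) (hd : 1 ≤ d) (hdn : d ≤ n - 1) (h2 : n ≤ 2 * d) :
    (∑ x ∈ range n, ((∑ j ∈ range n, vv d x j)
        + ((∑ j ∈ range n, vv d x j) - (∑ i ∈ range n, vv d i x))^2)) / 12
    = -(d : ℚ) ^ 3 / 6 + ((n : ℚ) / 3 - 7 / 24) * (d : ℚ) ^ 2 +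
        (-(n : ℚ) ^ 2 / 6 + 5 * (n : ℚ) / 12 - 1 / 8) * d +
        ((n : ℚ) ^ 3 / 36 - (n : ℚ) ^ 2 / 12 + (n : ℚ) / 18) := by
  have hn2 : 2 ≤ n := by omega
  have point : ∀ x ∈ range n,
      ((∑ j ∈ range n, vv d x j) + ((∑ j ∈ range n, vv d x j) - (∑ i ∈ range n, vv d i x))^2)
      = ((min d (n-1-x) : ℕ) : ℚ) + (((min d (n-1-x) : ℕ) : ℚ) - ((min x d : ℕ) : ℚ))^2 := by
    intro x hx
    rw [sQ_eval (mem_range.mp hx), tQ_eval (mem_range.mp hx)]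
  rw [Finset.sum_congr rfl point]
  rw [Finset.range_eq_Ico,
    ← Finset.sum_Ico_consecutive _ (show 0 ≤ d+1 by omega) (show d+1 ≤ n by omega),
    ← Finset.sum_Ico_consecutive _ (show 0 ≤ n-d by omega) (show n-d ≤ d+1 by omega)]
  have r1 : ∑ i ∈ Finset.Ico 0 (n-d),
      (((min d (n-1-i) : ℕ) : ℚ) + (((min d (n-1-i) : ℕ) : ℚ) - ((min i d : ℕ) : ℚ))^2)
      = ∑ k ∈ range (n-d-0), (((d:ℚ) + 0*(((0:ℕ):ℚ)+(k:ℚ)))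
          + ((d:ℚ) + (-1)*(((0:ℕ):ℚ)+(k:ℚ)))^2) := by
    rw [Finset.sum_Ico_eq_sum_range]
    refine Finset.sum_congr rfl fun k hk => ?_
    rw [mem_range] at hk
    have h1 : min d (n-1-(0+k)) = d := by omega
    have h2' : min (0+k) d = 0+k := by omega
    rw [h1, h2']
    push_cast
    ring
  have r2 : ∑ i ∈ Finset.Ico (n-d) (d+1),
      (((min d (n-1-i) : ℕ) : ℚ) + (((min d (n-1-i) : ℕ) : ℚ) - ((min i d : ℕ) : ℚ))^2)
      = ∑ k ∈ range (d+1-(n-d)), ((((n:ℚ)-1) + (-1)*(((n-d:ℕ):ℚ)+(k:ℚ)))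
          + (((n:ℚ)-1) + (-2)*(((n-d:ℕ):ℚ)+(k:ℚ)))^2) := by
    rw [Finset.sum_Ico_eq_sum_range]
    refine Finset.sum_congr rfl fun k hk => ?_
    rw [mem_range] at hk
    have h1 : min d (n-1-(n-d+k)) = n-1-(n-d+k) := by omega
    have h2' : min (n-d+k) d = n-d+k := by omega
    rw [h1, h2']
    rw [Nat.cast_sub (show n-d+k ≤ n-1 by omega), Nat.cast_sub (show 1 ≤ n by omega),
      Nat.cast_add, Nat.cast_sub (show d ≤ n by omega)]
    push_cast
    ring
  have r3 : ∑ i ∈ Finset.Ico (d+1) n,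
      (((min d (n-1-i) : ℕ) : ℚ) + (((min d (n-1-i) : ℕ) : ℚ) - ((min i d : ℕ) : ℚ))^2)
      = ∑ k ∈ range (n-(d+1)), ((((n:ℚ)-1) + (-1)*(((d+1:ℕ):ℚ)+(k:ℚ)))
          + ((((n:ℚ)-1-(d:ℚ))) + (-1)*(((d+1:ℕ):ℚ)+(k:ℚ)))^2) := by
    rw [Finset.sum_Ico_eq_sum_range]
    refine Finset.sum_congr rfl fun k hk => ?_
    rw [mem_range] at hk
    have h1 : min d (n-1-(d+1+k)) = n-1-(d+1+k) := by omega
    have h2' : min (d+1+k) d = d := by omega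
    rw [h1, h2']
    rw [Nat.cast_sub (show d+1+k ≤ n-1 by omega), Nat.cast_sub (show 1 ≤ n by omega)]
    push_cast
    ring
  rw [r1, r2, r3, sum_shift_poly, sum_shift_poly, sum_shift_poly]
  have c1 : ((n-d : ℕ):ℚ) = (n:ℚ) - d := by
    rw [Nat.cast_sub (show d ≤ n by omega)]
  have c15 : ((n-d-0 : ℕ):ℚ) = (n:ℚ) - d := by
    rw [Nat.sub_zero, Nat.cast_sub (show d ≤ n by omega)]
  have c2 : ((d+1-(n-d) : ℕ):ℚ) = 2*(d:ℚ)+1-n := by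
    rw [Nat.cast_sub (show n-d ≤ d+1 by omega), Nat.cast_sub (show d ≤ n by omega)]
    push_cast
    ring
  have c3 : ((n-(d+1):ℕ):ℚ) = (n:ℚ) - d - 1 := by
    rw [Nat.cast_sub (show d+1 ≤ n by omega)]
    push_cast
    ring
  rw [c15, c1, c2, c3]
  push_cast
  ring

theorem var_d_inversions_large_d (n d : ℕ) (hd : 1 ≤ d) (hdn : d ≤ n - 1) (h2 : n ≤ 2 * d) :
    let N : ℚ := Fintype.card (Equiv.Perm (Fin n))
    let X : Equiv.Perm (Fin n) → ℚ := fun σ =>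
      ((Finset.univ.filter fun p : Fin n × Fin n =>
        p.1 < p.2 ∧ (p.2 : ℕ) ≤ (p.1 : ℕ) + d ∧ σ p.2 < σ p.1).card : ℚ)
    (∑ σ : Equiv.Perm (Fin n), X σ ^ 2) / N - ((∑ σ : Equiv.Perm (Fin n), X σ) / N) ^ 2 =
      -(d : ℚ) ^ 3 / 6 + ((n : ℚ) / 3 - 7 / 24) * (d : ℚ) ^ 2 +
        (-(n : ℚ) ^ 2 / 6 + 5 * (n : ℚ) / 12 - 1 / 8) * d +
        ((n : ℚ) ^ 3 / 36 - (n : ℚ) ^ 2 / 12 + (n : ℚ) / 18) := by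
  intro N X
  have hNcard : ((univ : Finset (Equiv.Perm (Fin n))).card : ℚ) = N := by
    rw [Finset.card_univ]
  have hNpos : (0:ℚ) < N := by
    have h : 0 < Fintype.card (Equiv.Perm (Fin n)) := Fintype.card_pos
    show (0:ℚ) < ((Fintype.card (Equiv.Perm (Fin n)) : ℕ) : ℚ)
    exact_mod_cast h
  have hN0 : N ≠ 0 := ne_of_gt hNpos
  have hX : ∀ σ : Equiv.Perm (Fin n), X σ =
      ∑ p : Fin n × Fin n, vv d p.1.val p.2.val * (if σ p.2 < σ p.1 then (1:ℚ) else 0) := by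
    intro σ
    show ((Finset.univ.filter fun p : Fin n × Fin n =>
        p.1 < p.2 ∧ (p.2 : ℕ) ≤ (p.1 : ℕ) + d ∧ σ p.2 < σ p.1).card : ℚ) = _
    rw [Finset.card_filter]
    push_cast
    refine Finset.sum_congr rfl fun p _ => ?_
    unfold vv
    simp only [Fin.lt_def]
    split_ifs <;> (try norm_num) <;> tauto
  have hpair : ∀ p : Fin n × Fin n, (p.1:ℕ) < (p.2:ℕ) →
      (∑ σ : Equiv.Perm (Fin n), (if σ p.2 < σ p.1 then (1:ℚ) else 0)) = N / 2 := by
    intro p hp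
    rw [Finset.sum_boole]
    have hne : p.1 ≠ p.2 := by simp only [ne_eq, ← Fin.val_inj]; omega
    have hc := two_pt p.1 p.2 hne
    have hg : (univ.filter fun σ : Equiv.Perm (Fin n) => σ p.2 < σ p.1).card
        = g p.1 p.2 p.1 p.2 := by
      unfold g
      exact congrArg Finset.card (Finset.filter_congr fun σ _ => by tauto)
    have hcast := congrArg (fun m : ℕ => (m : ℚ)) hc
    push_cast at hcast
    rw [hg, ← hNcard]
    linarith
  have hE : (∑ σ : Equiv.Perm (Fin n), X σ)
      = N * ((∑ p : Fin n × Fin n, vv d p.1.val p.2.val) / 2) := by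
    rw [Finset.sum_congr rfl (fun σ _ => hX σ), Finset.sum_comm]
    have hinner : ∀ p : Fin n × Fin n,
        (∑ σ : Equiv.Perm (Fin n), vv d p.1.val p.2.val *
          (if σ p.2 < σ p.1 then (1:ℚ) else 0)) = vv d p.1.val p.2.val * (N/2) := by
      intro p
      rw [← Finset.mul_sum]
      by_cases hp : (p.1:ℕ) < (p.2:ℕ) ∧ (p.2:ℕ) ≤ (p.1:ℕ) + d
      · rw [hpair p hp.1]
      · have h0 : vv d p.1.val p.2.val = 0 := by unfold vv; rw [if_neg hp]
        rw [h0]; ring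
    rw [Finset.sum_congr rfl (fun p _ => hinner p), ← Finset.sum_mul]
    ring
  have hE2 : (∑ σ : Equiv.Perm (Fin n), X σ ^ 2)
      = N * (∑ p : Fin n × Fin n, ∑ q : Fin n × Fin n,
          vv d p.1.val p.2.val * vv d q.1.val q.2.val *
            ww p.1.val p.2.val q.1.val q.2.val) := by
    have hsq : ∀ σ : Equiv.Perm (Fin n), X σ ^ 2 =
        ∑ p : Fin n × Fin n, ∑ q : Fin n × Fin n,
          (vv d p.1.val p.2.val * (if σ p.2 < σ p.1 then (1:ℚ) else 0)) *
          (vv d q.1.val q.2.val * (if σ q.2 < σ q.1 then (1:ℚ) else 0)) := by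
      intro σ
      rw [hX σ, sq, Finset.sum_mul_sum]
    rw [Finset.sum_congr rfl fun σ _ => hsq σ, Finset.sum_comm,
      Finset.sum_congr rfl fun (p : Fin n × Fin n) _ => Finset.sum_comm, Finset.mul_sum]
    refine Finset.sum_congr rfl fun p _ => ?_
    rw [Finset.mul_sum]
    refine Finset.sum_congr rfl fun q _ => ?_
    by_cases hp : (p.1:ℕ) < (p.2:ℕ) ∧ (p.2:ℕ) ≤ (p.1:ℕ) + d
    · by_cases hq : (q.1:ℕ) < (q.2:ℕ) ∧ (q.2:ℕ) ≤ (q.1:ℕ) + d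
      · have hind : ∀ σ : Equiv.Perm (Fin n),
            (vv d p.1.val p.2.val * (if σ p.2 < σ p.1 then (1:ℚ) else 0)) *
            (vv d q.1.val q.2.val * (if σ q.2 < σ q.1 then (1:ℚ) else 0))
            = vv d p.1.val p.2.val * vv d q.1.val q.2.val *
              (if (σ p.2 < σ p.1 ∧ σ q.2 < σ q.1) then (1:ℚ) else 0) := by
          intro σ
          split_ifs <;> (try norm_num) <;> tauto
        rw [Finset.sum_congr rfl fun σ _ => hind σ, ← Finset.mul_sum, Finset.sum_boole,
          master p.1 p.2 q.1 q.2 hp.1 hq.1, hNcard]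
        ring
      · have h0 : vv d q.1.val q.2.val = 0 := by unfold vv; rw [if_neg hq]
        simp only [h0, zero_mul, mul_zero, Finset.sum_const_zero]
    · have h0 : vv d p.1.val p.2.val = 0 := by unfold vv; rw [if_neg hp]
      simp only [h0, zero_mul, mul_zero, Finset.sum_const_zero]
  rw [hE, hE2, mul_div_cancel_left₀ _ hN0, mul_div_cancel_left₀ _ hN0]
  have convM : (∑ p : Fin n × Fin n, vv d p.1.val p.2.val)
      = ∑ i ∈ range n, ∑ j ∈ range n, vv d i j := by
    rw [Fintype.sum_prod_type,
      Fin.sum_univ_eq_sum_range (fun iv => ∑ j : Fin n, vv d iv j.val) n]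
    refine Finset.sum_congr rfl fun i _ => ?_
    rw [Fin.sum_univ_eq_sum_range (fun jv => vv d i jv) n]
  have convW : (∑ p : Fin n × Fin n, ∑ q : Fin n × Fin n,
        vv d p.1.val p.2.val * vv d q.1.val q.2.val * ww p.1.val p.2.val q.1.val q.2.val)
      = ∑ i ∈ range n, ∑ j ∈ range n, ∑ k ∈ range n, ∑ l ∈ range n,
          vv d i j * vv d k l * ww i j k l := by
    simp only [Fintype.sum_prod_type]
    rw [Fin.sum_univ_eq_sum_range (fun iv => ∑ j : Fin n, ∑ k : Fin n, ∑ l : Fin n,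
      vv d iv j.val * vv d k.val l.val * ww iv j.val k.val l.val) n]
    refine Finset.sum_congr rfl fun i _ => ?_
    rw [Fin.sum_univ_eq_sum_range (fun jv => ∑ k : Fin n, ∑ l : Fin n,
      vv d i jv * vv d k.val l.val * ww i jv k.val l.val) n]
    refine Finset.sum_congr rfl fun j _ => ?_
    rw [Fin.sum_univ_eq_sum_range (fun kv => ∑ l : Fin n,
      vv d i j * vv d kv l.val * ww i j kv l.val) n]
    refine Finset.sum_congr rfl fun k _ => ?_
    rw [Fin.sum_univ_eq_sum_range (fun lv => vv d i j * vv d k lv * ww i j k lv) n]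
  rw [convW, convM, arith_core n d]
  exact arith_eval n d hd hdn h2
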